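/- Define h(x) = e^{−x}(1 + ε cos x) for x ≥ 0 and |ε| < 1/2. Then the associated β function is β(x) = (1 + ε cos x)(1 + 2ε sin x)/(1 + ε cos x + ε sin x)², and it satisfies 0 < inf β ≤ sup β < ∞. -/

import Mathlib

private lemma deriv1 (ε : ℝ) (x : ℝ) :
    HasDerivAt (fun x => Real.exp (-x) * (1 + ε * Real.cos x))
      (-(Real.exp (-x) * (1 + ε * Real.cos x + ε * Real.sin x))) x := by
  have he : HasDerivAt (fun x : ℝ => Real.exp (-x)) (-Real.exp (-x)) x := by
    simpa [Function.comp_def] using (Real.hasDerivAt_exp (-x)).comp x (hasDerivAt_neg x)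
  have hc : HasDerivAt (fun x : ℝ => 1 + ε * Real.cos x) (ε * (-Real.sin x)) x := by
    simpa [Pi.add_def] using (hasDerivAt_const x (1:ℝ)).add ((Real.hasDerivAt_cos x).const_mul ε)
  have := he.mul hc
  refine this.congr_deriv ?_
  ring

private lemma deriv2 (ε : ℝ) (x : ℝ) :
    HasDerivAt (fun x => -(Real.exp (-x) * (1 + ε * Real.cos x + ε * Real.sin x)))
      (Real.exp (-x) * (1 + 2 * ε * Real.sin x)) x := by
  have he : HasDerivAt (fun x : ℝ => Real.exp (-x)) (-Real.exp (-x)) x := by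
    simpa [Function.comp_def] using (Real.hasDerivAt_exp (-x)).comp x (hasDerivAt_neg x)
  have hc : HasDerivAt (fun x : ℝ => 1 + ε * Real.cos x + ε * Real.sin x)
      (ε * (-Real.sin x) + ε * Real.cos x) x := by
    simpa [Pi.add_def] using (((hasDerivAt_const x (1:ℝ)).add ((Real.hasDerivAt_cos x).const_mul ε)).add
      ((Real.hasDerivAt_sin x).const_mul ε))
  have := (he.mul hc).neg
  refine this.congr_deriv ?_
  ring

/-- For `h(x) = e^{−x}(1 + ε cos x)` with `|ε| < 1/2`, the associated β function equals
`(1 + ε cos x)(1 + 2ε sin x)/(1 + ε cos x + ε sin x)²`, and it is bounded above and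
below away from zero. -/
theorem stmt_9 (ε : ℝ) (hε : |ε| < 1/2)
    (h : ℝ → ℝ) (hh : h = fun x => Real.exp (-x) * (1 + ε * Real.cos x)) :
    (∀ x ≥ (0:ℝ), deriv (deriv h) x * h x / (deriv h x) ^ 2 =
      (1 + ε * Real.cos x) * (1 + 2 * ε * Real.sin x) /
        (1 + ε * Real.cos x + ε * Real.sin x) ^ 2) ∧
    ∃ c C : ℝ, 0 < c ∧ ∀ x ≥ (0:ℝ),
      c ≤ (1 + ε * Real.cos x) * (1 + 2 * ε * Real.sin x) /
            (1 + ε * Real.cos x + ε * Real.sin x) ^ 2 ∧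
      (1 + ε * Real.cos x) * (1 + 2 * ε * Real.sin x) /
            (1 + ε * Real.cos x + ε * Real.sin x) ^ 2 ≤ C := by
  have habs : ∀ x : ℝ, |ε * Real.cos x| ≤ |ε| := fun x => by
    rw [abs_mul]
    calc |ε| * |Real.cos x| ≤ |ε| * 1 :=
          mul_le_mul_of_nonneg_left (Real.abs_cos_le_one x) (abs_nonneg ε)
      _ = |ε| := mul_one _
  have habs' : ∀ x : ℝ, |ε * Real.sin x| ≤ |ε| := fun x => by
    rw [abs_mul]
    calc |ε| * |Real.sin x| ≤ |ε| * 1 :=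
          mul_le_mul_of_nonneg_left (Real.abs_sin_le_one x) (abs_nonneg ε)
      _ = |ε| := mul_one _
  have h1 : ∀ x : ℝ, deriv h x = -(Real.exp (-x) * (1 + ε * Real.cos x + ε * Real.sin x)) := by
    intro x
    rw [hh]
    exact (deriv1 ε x).deriv
  have h2 : ∀ x : ℝ, deriv (deriv h) x = Real.exp (-x) * (1 + 2 * ε * Real.sin x) := by
    intro x
    have : deriv h = fun x => -(Real.exp (-x) * (1 + ε * Real.cos x + ε * Real.sin x)) :=
      funext h1
    rw [this]
    exact (deriv2 ε x).deriv
  have hD : ∀ x : ℝ, (0:ℝ) < 1 + ε * Real.cos x + ε * Real.sin x := by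
    intro x
    have := habs x
    have := habs' x
    have h1' := abs_le.mp (habs x)
    have h2' := abs_le.mp (habs' x)
    have := abs_nonneg ε
    linarith [h1'.1, h2'.1]
  constructor
  · intro x _
    rw [h1, h2, hh]
    have he : Real.exp (-x) ≠ 0 := Real.exp_ne_zero _
    have hDx := (hD x).ne'
    field_simp
  · refine ⟨(1 - |ε|) * (1 - 2 * |ε|) / 4, (1 + |ε|) * (1 + 2 * |ε|) / (1 - 2 * |ε|) ^ 2,
      ?_, ?_⟩
    · have h0 : (0:ℝ) ≤ |ε| := abs_nonneg ε
      have : (0:ℝ) < 1 - |ε| := by linarith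
      have : (0:ℝ) < 1 - 2 * |ε| := by linarith
      positivity
    · intro x _
      have h0 : (0:ℝ) ≤ |ε| := abs_nonneg ε
      have hc := abs_le.mp (habs x)
      have hs := abs_le.mp (habs' x)
      have hN1 : 1 - |ε| ≤ 1 + ε * Real.cos x := by linarith [hc.1]
      have hN1' : 1 + ε * Real.cos x ≤ 1 + |ε| := by linarith [hc.2]
      have hN2 : 1 - 2 * |ε| ≤ 1 + 2 * ε * Real.sin x := by linarith [hs.1]
      have hN2' : 1 + 2 * ε * Real.sin x ≤ 1 + 2 * |ε| := by linarith [hs.2]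
      have hDlo : 1 - 2 * |ε| ≤ 1 + ε * Real.cos x + ε * Real.sin x := by
        linarith [hc.1, hs.1]
      have hDhi : 1 + ε * Real.cos x + ε * Real.sin x ≤ 1 + 2 * |ε| := by
        linarith [hc.2, hs.2]
      have hpos1 : (0:ℝ) < 1 - 2 * |ε| := by linarith
      have hDp := hD x
      have hNlo : (1 - |ε|) * (1 - 2 * |ε|) ≤ (1 + ε * Real.cos x) * (1 + 2 * ε * Real.sin x) :=
        mul_le_mul hN1 hN2 (by linarith) (by linarith)
      have hNhi : (1 + ε * Real.cos x) * (1 + 2 * ε * Real.sin x) ≤ (1 + |ε|) * (1 + 2 * |ε|) :=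
        mul_le_mul hN1' hN2' (by linarith) (by linarith)
      have hDsqhi : (1 + ε * Real.cos x + ε * Real.sin x) ^ 2 ≤ 4 := by nlinarith
      have hDsqlo : (1 - 2 * |ε|) ^ 2 ≤ (1 + ε * Real.cos x + ε * Real.sin x) ^ 2 :=
        pow_le_pow_left₀ (le_of_lt hpos1) hDlo 2
      constructor
      · exact div_le_div₀ (by nlinarith) hNlo (by positivity) hDsqhi
      · exact div_le_div₀ (by positivity) hNhi (by positivity) hDsqlo
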